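/- Let N ≥ 1, T > 0, let a, b : ℝ → ℝ be continuous, and σ ∈ ℝ. Let x : [0,T] → ℝ^N be continuous with x_1(t), …, x_N(t) pairwise distinct for every t ∈ [0,T], and let β : [0,T] → ℝ^N be differentiable and satisfy, for every i and every t ∈ [0,T], the weight equation of the Gauss–Galerkin evolution equations: β̇_i = 2β_i a(x_i) l'_{ii} + σ²(β_i b(x_i)²((l'_{ii})² + l''_{ii}) + Σ_{j≠i} β_j b(x_j)² (l'_{ij})²), where the Lagrange quantities are evaluated at the nodes x_1(t), …, x_N(t). If β_i(0) > 0 for every i, then β_i(t) > 0 for every i and every t ∈ [0,T]. -/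

import Mathlib

open Finset

/-- `l'_{ii} = ∑_{k≠i} 1/(x_i − x_k)`, the derivative of the `i`-th Lagrange basis
polynomial at its own node. -/
noncomputable def lpDiag {N : ℕ} (x : Fin N → ℝ) (i : Fin N) : ℝ :=
  ∑ k ∈ Finset.univ.erase i, 1 / (x i - x k)

/-- `l'_{ij} = (∏_{k≠j}(x_j − x_k)) / ((x_j − x_i)·∏_{k≠i}(x_i − x_k))` for `j ≠ i`,
the derivative of the `i`-th Lagrange basis polynomial at the node `x_j`. -/
noncomputable def lpOff {N : ℕ} (x : Fin N → ℝ) (i j : Fin N) : ℝ :=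
  (∏ k ∈ Finset.univ.erase j, (x j - x k)) /
    ((x j - x i) * ∏ k ∈ Finset.univ.erase i, (x i - x k))

/-- `l''_{ii} = (∑_{k≠i} 1/(x_i − x_k))² − ∑_{k≠i} 1/(x_i − x_k)²`, the second derivative
of the `i`-th Lagrange basis polynomial at its own node. -/
noncomputable def lppDiag {N : ℕ} (x : Fin N → ℝ) (i : Fin N) : ℝ :=
  (∑ k ∈ Finset.univ.erase i, 1 / (x i - x k)) ^ 2 -
    ∑ k ∈ Finset.univ.erase i, 1 / (x i - x k) ^ 2

/-- Right-hand side of the Gauss–Galerkin node equation (the `x`-equation):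
`β_i A_i + σ²(2 β_i b(x_i)² l'_{ii} + ∑_{j≠i} β_j b(x_j)² (x_j − x_i)(l'_{ij})²)`,
where `A_i` is the drift value at node `i` (possibly configuration dependent). -/
noncomputable def ggDriftRHS {N : ℕ} (A : Fin N → ℝ) (b : ℝ → ℝ) (σ : ℝ)
    (x β : Fin N → ℝ) (i : Fin N) : ℝ :=
  β i * A i + σ ^ 2 * (2 * β i * (b (x i)) ^ 2 * lpDiag x i +
    ∑ j ∈ Finset.univ.erase i, β j * (b (x j)) ^ 2 * (x j - x i) * (lpOff x i j) ^ 2)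

/-- Right-hand side of the Gauss–Galerkin weight equation (the `β`-equation):
`2 β_i A_i l'_{ii} + σ²(β_i b(x_i)²((l'_{ii})² + l''_{ii}) + ∑_{j≠i} β_j b(x_j)²(l'_{ij})²)`. -/
noncomputable def ggWeightRHS {N : ℕ} (A : Fin N → ℝ) (b : ℝ → ℝ) (σ : ℝ)
    (x β : Fin N → ℝ) (i : Fin N) : ℝ :=
  2 * β i * A i * lpDiag x i +
    σ ^ 2 * (β i * (b (x i)) ^ 2 * ((lpDiag x i) ^ 2 + lppDiag x i) +
      ∑ j ∈ Finset.univ.erase i, β j * (b (x j)) ^ 2 * (lpOff x i j) ^ 2)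

/-- The stationary Gauss–Galerkin equations with node-dependent drift values `A_i`. -/
def StationaryGGWithDrift {N : ℕ} (A : Fin N → ℝ) (b : ℝ → ℝ) (σ : ℝ)
    (x β : Fin N → ℝ) : Prop :=
  ∀ i, 0 = ggDriftRHS A b σ x β i ∧ 0 = ggWeightRHS A b σ x β i

/-- The stationary Gauss–Galerkin equations with drift `a : ℝ → ℝ`,
diffusion `b : ℝ → ℝ` and parameter `σ`. -/
def StationaryGG {N : ℕ} (a b : ℝ → ℝ) (σ : ℝ) (x β : Fin N → ℝ) : Prop :=
  StationaryGGWithDrift (fun i => a (x i)) b σ x β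

/-- **Positivity of Gauss–Galerkin weights.**
If `(x, β)` solves the weight equation of the Gauss–Galerkin evolution equations on `[0, T]`
with continuous pairwise-distinct nodes and `β_i(0) > 0` for all `i`, then `β_i(t) > 0`
for all `i` and `t ∈ [0, T]`. -/
theorem gg_weights_stay_positive {N : ℕ} (hN : 1 ≤ N) (T : ℝ) (hT : 0 < T)
    (a b : ℝ → ℝ) (ha : Continuous a) (hb : Continuous b) (σ : ℝ)
    (x β : ℝ → Fin N → ℝ)
    (hxcont : ∀ i, ContinuousOn (fun t => x t i) (Set.Icc 0 T))
    (hdist : ∀ t ∈ Set.Icc (0 : ℝ) T, ∀ i j : Fin N, i ≠ j → x t i ≠ x t j)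
    (hβeq : ∀ t ∈ Set.Icc (0 : ℝ) T, ∀ i,
      HasDerivAt (fun s => β s i)
        (ggWeightRHS (fun i => a (x t i)) b σ (x t) (β t) i) t)
    (hβ0 : ∀ i, 0 < β 0 i) :
    ∀ t ∈ Set.Icc (0 : ℝ) T, ∀ i, 0 < β t i := by
  have hβcont : ∀ i, ContinuousOn (fun t => β t i) (Set.Icc 0 T) := fun i t ht =>
    (hβeq t ht i).continuousAt.continuousWithinAt
  by_contra hcon
  push_neg at hcon
  obtain ⟨t₀, ht₀, i₀, hi₀⟩ := hcon
  set B : Set ℝ := ⋃ i : Fin N, (Set.Icc 0 T ∩ (fun t => β t i) ⁻¹' Set.Iic 0) with hBdef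
  have hBsub : B ⊆ Set.Icc 0 T := by
    intro t ht
    simp only [hBdef, Set.mem_iUnion] at ht
    obtain ⟨i, hi, _⟩ := ht
    exact hi
  have hBne : B.Nonempty := ⟨t₀, Set.mem_iUnion.2 ⟨i₀, ht₀, hi₀⟩⟩
  have hBclosed : IsClosed B := by
    apply isClosed_iUnion_of_finite
    intro i
    exact (hβcont i).preimage_isClosed_of_isClosed isClosed_Icc isClosed_Iic
  have hBbdd : BddBelow B := bddBelow_Icc.mono hBsub
  set τ := sInf B with hτdef
  have hτmem : τ ∈ B := hBclosed.csInf_mem hBne hBbdd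
  have hτIcc : τ ∈ Set.Icc (0 : ℝ) T := hBsub hτmem
  obtain ⟨i, hτi⟩ : ∃ i, β τ i ≤ 0 := by
    simp only [hBdef, Set.mem_iUnion] at hτmem
    obtain ⟨i, _, hi⟩ := hτmem
    exact ⟨i, hi⟩
  have hτpos : 0 < τ := by
    rcases lt_or_eq_of_le hτIcc.1 with h | h
    · exact h
    · exact absurd hτi (by rw [← h]; exact (hβ0 i).not_ge)
  -- positivity strictly before τ
  have hpos_lt : ∀ s ∈ Set.Ico (0 : ℝ) τ, ∀ j, 0 < β s j := by
    intro s hs j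
    by_contra hle
    push_neg at hle
    exact notMem_of_lt_csInf hs.2 hBbdd
      (Set.mem_iUnion.2 ⟨j, ⟨hs.1, hs.2.le.trans hτIcc.2⟩, hle⟩)
  have hIccsub : Set.Icc (0 : ℝ) τ ⊆ Set.Icc 0 T :=
    Set.Icc_subset_Icc le_rfl hτIcc.2
  -- nonnegativity on [0, τ]
  have hnonneg : ∀ s ∈ Set.Icc (0 : ℝ) τ, ∀ j, 0 ≤ β s j := by
    intro s hs j
    have hclosed : IsClosed (Set.Icc (0:ℝ) τ ∩ (fun t => β t j) ⁻¹' Set.Ici 0) :=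
      ((hβcont j).mono hIccsub).preimage_isClosed_of_isClosed isClosed_Icc isClosed_Ici
    have hsub : Set.Ico (0:ℝ) τ ⊆ Set.Icc (0:ℝ) τ ∩ (fun t => β t j) ⁻¹' Set.Ici 0 :=
      fun u hu => ⟨⟨hu.1, hu.2.le⟩, (hpos_lt u hu j).le⟩
    have := hclosed.closure_subset_iff.2 hsub
    rw [closure_Ico hτpos.ne] at this
    exact (this hs).2
  -- the coefficient function and its bound
  set C : ℝ → ℝ := fun t => 2 * a (x t i) * lpDiag (x t) i +
      σ ^ 2 * (b (x t i)) ^ 2 * ((lpDiag (x t) i) ^ 2 + lppDiag (x t) i) with hCdef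
  have hLcont : ContinuousOn (fun t => lpDiag (x t) i) (Set.Icc 0 T) := by
    unfold lpDiag
    apply continuousOn_finset_sum
    intro k hk
    exact continuousOn_const.div ((hxcont i).sub (hxcont k))
      (fun t ht => sub_ne_zero.2 (hdist t ht i k (Finset.ne_of_mem_erase hk).symm))
  have hPcont : ContinuousOn (fun t => lppDiag (x t) i) (Set.Icc 0 T) := by
    unfold lppDiag
    apply ContinuousOn.sub
    · exact (continuousOn_finset_sum _ fun k hk =>
        continuousOn_const.div ((hxcont i).sub (hxcont k))
          (fun t ht => sub_ne_zero.2 (hdist t ht i k (Finset.ne_of_mem_erase hk).symm))).pow 2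
    · apply continuousOn_finset_sum
      intro k hk
      exact continuousOn_const.div (((hxcont i).sub (hxcont k)).pow 2)
        (fun t ht => pow_ne_zero 2 (sub_ne_zero.2 (hdist t ht i k (Finset.ne_of_mem_erase hk).symm)))
  have hCcont : ContinuousOn C (Set.Icc 0 T) := by
    apply ContinuousOn.add
    · exact (continuousOn_const.mul (ha.comp_continuousOn (hxcont i))).mul hLcont
    · exact (continuousOn_const.mul ((hb.comp_continuousOn (hxcont i)).pow 2)).mul
        ((hLcont.pow 2).add hPcont)
  obtain ⟨M, hM⟩ := isCompact_Icc.exists_bound_of_continuousOn hCcont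
  -- the auxiliary function
  set f : ℝ → ℝ := fun t => β t i * Real.exp (M * t) with hfdef
  have hfderiv : ∀ t ∈ Set.Icc (0 : ℝ) T, HasDerivAt f
      ((ggWeightRHS (fun j => a (x t j)) b σ (x t) (β t) i + M * β t i) * Real.exp (M * t)) t := by
    intro t ht
    have he : HasDerivAt (fun s => Real.exp (M * s)) (Real.exp (M * t) * M) t := by
      simpa using ((hasDerivAt_id t).const_mul M).exp
    have : HasDerivAt (fun s => β s i * Real.exp (M * s)) _ t := (hβeq t ht i).mul he
    convert this using 1
    ring
  -- key inequality on [0, τ]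
  have hkey : ∀ t ∈ Set.Icc (0 : ℝ) τ,
      0 ≤ ggWeightRHS (fun j => a (x t j)) b σ (x t) (β t) i + M * β t i := by
    intro t ht
    have htT : t ∈ Set.Icc (0:ℝ) T := hIccsub ht
    have hS : 0 ≤ ∑ j ∈ Finset.univ.erase i, β t j * (b (x t j)) ^ 2 * (lpOff (x t) i j) ^ 2 :=
      Finset.sum_nonneg fun j _ =>
        mul_nonneg (mul_nonneg (hnonneg t ht j) (sq_nonneg _)) (sq_nonneg _)
    have hrw : ggWeightRHS (fun j => a (x t j)) b σ (x t) (β t) i + M * β t i =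
        β t i * (C t + M) +
          σ ^ 2 * ∑ j ∈ Finset.univ.erase i, β t j * (b (x t j)) ^ 2 * (lpOff (x t) i j) ^ 2 := by
      simp only [ggWeightRHS, hCdef]
      ring
    rw [hrw]
    have hCM : 0 ≤ C t + M := by
      have := hM t htT
      rw [Real.norm_eq_abs] at this
      linarith [neg_abs_le (C t)]
    exact add_nonneg (mul_nonneg (hnonneg t ht i) hCM) (mul_nonneg (sq_nonneg σ) hS)
  -- monotonicity of f on [0, τ]
  have hmono : MonotoneOn f (Set.Icc 0 τ) := by
    apply monotoneOn_of_deriv_nonneg (convex_Icc 0 τ)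
    · intro t ht
      exact (hfderiv t (hIccsub ht)).continuousAt.continuousWithinAt
    · intro t ht
      rw [interior_Icc] at ht
      exact ((hfderiv t (hIccsub ⟨ht.1.le, ht.2.le⟩)).differentiableAt).differentiableWithinAt
    · intro t ht
      rw [interior_Icc] at ht
      have ht' : t ∈ Set.Icc (0:ℝ) τ := ⟨ht.1.le, ht.2.le⟩
      rw [(hfderiv t (hIccsub ht')).deriv]
      exact mul_nonneg (hkey t ht') (Real.exp_pos _).le
  have h0 : f 0 ≤ f τ := hmono (Set.left_mem_Icc.2 hτpos.le) (Set.right_mem_Icc.2 hτpos.le) hτpos.le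
  have hf0 : 0 < f 0 := by
    simp only [hfdef, mul_zero, Real.exp_zero, mul_one]
    exact hβ0 i
  have hfτ : f τ ≤ 0 := mul_nonpos_of_nonpos_of_nonneg hτi (Real.exp_pos _).le
  linarith
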